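/- arXiv:1007.4220 — 2 statements merged into one kernel-verified Lean document; each statement's English description precedes it below -/
import Mathlib

section
/- Let U be a finite-dimensional complex vector space and g a meromorphic map from the unit disc Δ to End(U), holomorphic on the punctured disc Δ*, with g(t) invertible for t ≠ 0. Then there exist a diagonalizable endomorphism A of U with integer eigenvalues, and holomorphic maps L, R : Δ → End(U) with L(0), R(0) invertible, such that g(t) = L(t) · t^A · R(t) for all t ≠ 0, where t^A denotes the one-parameter group generated by A. -/
set_option synthInstance.maxHeartbeats 1000000
set_option maxHeartbeats 1600000

open Filter Metric

noncomputable section BirkhoffAux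

abbrev Gm := Filter.Germ (nhds (0:ℂ)) ℂ

/-- The subring of germs at `0` of functions `ℂ → ℂ` that are analytic at `0`. -/
def OO : Subring Gm where
  carrier := {x | ∃ f : ℂ → ℂ, AnalyticAt ℂ f 0 ∧ x = ↑f}
  mul_mem' := by
    rintro a b ⟨f, hf, rfl⟩ ⟨g, hg, rfl⟩
    exact ⟨f * g, hf.mul hg, (Filter.Germ.coe_mul _ _).symm⟩
  one_mem' := ⟨fun _ => 1, analyticAt_const, rfl⟩
  add_mem' := by
    rintro a b ⟨f, hf, rfl⟩ ⟨g, hg, rfl⟩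
    exact ⟨f + g, hf.add hg, rfl⟩
  zero_mem' := ⟨fun _ => 0, analyticAt_const, rfl⟩
  neg_mem' := by
    rintro a ⟨f, hf, rfl⟩
    exact ⟨-f, hf.neg, rfl⟩

/-- Build an element of `OO` from a function analytic at `0`. -/
def toO (f : ℂ → ℂ) (hf : AnalyticAt ℂ f 0) : OO := ⟨↑f, f, hf, rfl⟩

@[simp] lemma toO_val (f : ℂ → ℂ) (hf : AnalyticAt ℂ f 0) : (toO f hf).val = ↑f := rfl

/-- The germ of the identity. -/
def tO : OO := toO (fun z => z) analyticAt_id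

/-- A chosen analytic representative. -/
def rep (x : OO) : ℂ → ℂ := x.2.choose

lemma rep_analytic (x : OO) : AnalyticAt ℂ (rep x) 0 := x.2.choose_spec.1

lemma rep_spec (x : OO) : x.val = ↑(rep x) := x.2.choose_spec.2

lemma germ_value {f g : ℂ → ℂ} (h : (↑f : Gm) = ↑g) : f 0 = g 0 :=
  (Filter.Germ.coe_eq.mp h).self_of_nhds

lemma val_eq_iff {x y : OO} : x = y ↔ x.val = y.val := Subtype.ext_iff

@[simp] lemma val_mul (x y : OO) : (x * y).val = x.val * y.val := rfl
@[simp] lemma val_add (x y : OO) : (x + y).val = x.val + y.val := rfl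
@[simp] lemma val_one : (1 : OO).val = ((fun _ => (1:ℂ) : ℂ → ℂ) : Gm) := rfl
@[simp] lemma val_zero' : (0 : OO).val = ((fun _ => (0:ℂ) : ℂ → ℂ) : Gm) := rfl
@[simp] lemma val_pow (x : OO) (k : ℕ) : (x ^ k).val = x.val ^ k := by
  induction k with
  | zero => rfl
  | succ k ih => rw [pow_succ, pow_succ, ← ih]; rfl

lemma rep_germ_eq {x : OO} {f : ℂ → ℂ} (h : x.val = ↑f) : ∀ᶠ z in nhds (0:ℂ), rep x z = f z :=
  Filter.Germ.coe_eq.mp ((rep_spec x).symm.trans h)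

/-- evaluation at 0, unbundled -/
def evf (x : OO) : ℂ := rep x 0

lemma evf_eq {x : OO} {f : ℂ → ℂ} (h : x.val = ↑f) : evf x = f 0 :=
  (rep_germ_eq h).self_of_nhds

lemma evf_toO (f : ℂ → ℂ) (hf : AnalyticAt ℂ f 0) : evf (toO f hf) = f 0 := evf_eq rfl

lemma evf_mul (x y : OO) : evf (x * y) = evf x * evf y := by
  have h : (x * y).val = ↑(rep x * rep y) := by
    rw [val_mul, rep_spec x, rep_spec y, Filter.Germ.coe_mul]
  exact evf_eq h

lemma evf_add (x y : OO) : evf (x + y) = evf x + evf y := by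
  have h : (x + y).val = ↑(rep x + rep y) := by
    rw [val_add, rep_spec x, rep_spec y]; rfl
  exact evf_eq h

/-- Evaluation at 0 as a ring hom. -/
def ev : OO →+* ℂ where
  toFun := evf
  map_one' := evf_eq (f := fun _ => (1:ℂ)) rfl
  map_mul' := evf_mul
  map_zero' := evf_eq (f := fun _ => (0:ℂ)) rfl
  map_add' := evf_add

lemma ev_apply (x : OO) : ev x = rep x 0 := rfl

lemma ev_toO (f : ℂ → ℂ) (hf : AnalyticAt ℂ f 0) : ev (toO f hf) = f 0 := evf_toO f hf

@[simp] lemma ev_tO : ev tO = 0 := ev_toO _ _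

/-- constants -/
def constO (c : ℂ) : OO := toO (fun _ => c) analyticAt_const

@[simp] lemma ev_constO (c : ℂ) : ev (constO c) = c := ev_toO _ _

lemma isUnit_of_value_ne (f : ℂ → ℂ) (hf : AnalyticAt ℂ f 0) (h0 : f 0 ≠ 0) :
    IsUnit (toO f hf) := by
  refine IsUnit.of_mul_eq_one (toO (fun z => (f z)⁻¹) (hf.inv h0)) ?_
  rw [val_eq_iff, val_mul, toO_val, toO_val, val_one, ← Filter.Germ.coe_mul, Filter.Germ.coe_eq]
  have : ∀ᶠ z in nhds (0:ℂ), f z ≠ 0 := hf.continuousAt.eventually_ne h0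
  filter_upwards [this] with z hz
  simp [mul_inv_cancel₀ hz]

lemma ev_ne_zero_of_isUnit {x : OO} (h : IsUnit x) : ev x ≠ 0 := by
  obtain ⟨u, rfl⟩ := h
  have h1 : ev (u : OO) * ev ((u⁻¹ : OOˣ) : OO) = 1 := by
    rw [← map_mul]
    norm_cast
    simp
  intro h0; rw [h0, zero_mul] at h1; exact zero_ne_one h1

lemma tO_pow_val (k : ℕ) : ((tO ^ k : OO)).val = ((fun z => z ^ k : ℂ → ℂ) : Gm) := by
  rw [val_pow]
  show ((fun z => z : ℂ → ℂ) : Gm)^k = _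
  rw [← Filter.Germ.coe_pow]
  rfl

lemma tO_pow_ne_zero (k : ℕ) : (tO ^ k : OO) ≠ 0 := by
  rw [Ne, val_eq_iff, tO_pow_val, val_zero', Filter.Germ.coe_eq]
  intro h
  have h2 : ∀ᶠ z in nhdsWithin (0:ℂ) {(0:ℂ)}ᶜ, z ^ k = (0:ℂ) :=
    (h : ∀ᶠ z in nhds (0:ℂ), z ^ k = 0).filter_mono nhdsWithin_le_nhds
  have h3 : ∀ᶠ z in nhdsWithin (0:ℂ) {(0:ℂ)}ᶜ, z ∈ ({(0:ℂ)}ᶜ : Set ℂ) := self_mem_nhdsWithin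
  obtain ⟨z, hz1, hz2⟩ := (h2.and h3).exists
  exact (pow_ne_zero k hz2) hz1

/-- Factorization: every nonzero element of `OO` is `t^k · unit`. -/
lemma exists_factor (x : OO) (hx : x ≠ 0) :
    ∃ (k : ℕ) (u : OO), IsUnit u ∧ x = tO ^ k * u := by
  have hf := rep_analytic x
  have hne : ¬ (∀ᶠ z in nhds (0:ℂ), rep x z = 0) := by
    intro h
    apply hx
    rw [val_eq_iff, rep_spec x, val_zero', Filter.Germ.coe_eq]
    exact h
  obtain ⟨n, g, hg, hg0, heq⟩ := (hf.exists_eventuallyEq_pow_smul_nonzero_iff).mpr hne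
  refine ⟨n, toO g hg, isUnit_of_value_ne g hg hg0, ?_⟩
  rw [val_eq_iff, rep_spec x, val_mul, tO_pow_val, toO_val, ← Filter.Germ.coe_mul, Filter.Germ.coe_eq]
  filter_upwards [heq] with z hz
  simpa [smul_eq_mul] using hz

open Classical in
/-- order -/
def ord (x : OO) : ℕ := if h : x = 0 then 0 else (exists_factor x h).choose

lemma ord_spec {x : OO} (h : x ≠ 0) : ∃ u, IsUnit u ∧ x = tO ^ (ord x) * u := by
  classical
  rw [ord, dif_neg h]
  exact (exists_factor x h).choose_spec

lemma dvd_of_ord_le {x y : OO} (hx : x ≠ 0) (h : y = 0 ∨ (y ≠ 0 ∧ ord x ≤ ord y)) : x ∣ y := by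
  rcases h with rfl | ⟨hy, hle⟩
  · exact dvd_zero x
  obtain ⟨u, hu, hxe⟩ := ord_spec hx
  obtain ⟨v, hv, hye⟩ := ord_spec hy
  obtain ⟨ui, hui⟩ := hu.exists_right_inv
  generalize ha : ord x = a at hxe hle
  generalize hb : ord y = b at hye hle
  obtain ⟨d, rfl⟩ : ∃ d, b = a + d := ⟨b - a, (Nat.add_sub_cancel' hle).symm⟩
  refine ⟨tO ^ d * ui * v, hye.trans ?_⟩
  rw [hxe]
  calc tO ^ (a+d) * v = (tO^a * tO^d) * ((u*ui)*v) := by rw [hui, one_mul, pow_add]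
    _ = tO^a*u*(tO^d*ui*v) := by ring

/-- cancel units: if `t^k * u * z = 0` with `u` a unit then `z = 0`. -/
lemma eq_zero_of_unit_pow_mul {k : ℕ} {u z : OO} (hu : IsUnit u) (h : tO ^ k * u * z = 0) :
    z = 0 := by
  by_contra hz
  obtain ⟨j, v, hv, rfl⟩ := exists_factor z hz
  obtain ⟨w, hw2⟩ := (hu.mul hv).exists_right_inv
  apply tO_pow_ne_zero (k + j)
  have : tO ^ k * u * (tO ^ j * v) * w = 0 := by rw [h, zero_mul]
  calc tO ^ (k+j) = tO ^ k * tO ^ j * (u * v * w) := by rw [hw2, mul_one, pow_add]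
    _ = tO ^ k * u * (tO ^ j * v) * w := by ring
    _ = 0 := this


section ApproxPart

set_option synthInstance.maxHeartbeats 1000000
set_option maxHeartbeats 1600000

open Matrix

/-- germ of a finite sum of functions -/
lemma germ_sum {ι : Type*} (s : Finset ι) (f : ι → ℂ → ℂ) :
    ((↑(fun z => ∑ i ∈ s, f i z) : Gm)) = ∑ i ∈ s, (↑(f i) : Gm) := by
  have h1 : (fun z => ∑ i ∈ s, f i z) = ∑ i ∈ s, f i := by
    funext z; simp [Finset.sum_apply]
  rw [h1, ← Filter.Germ.coe_coeRingHom (l := nhds (0:ℂ))]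
  exact map_sum (Filter.Germ.coeRingHom (nhds (0:ℂ))) f s

lemma val_sum {ι : Type*} (s : Finset ι) (f : ι → OO) :
    ((∑ i ∈ s, f i : OO)).val = ∑ i ∈ s, (f i).val := by
  exact map_sum OO.subtype f s

variable {N : ℕ}

/-- matrix of germs from a matrix-valued function with entire entries -/
def matO (Rp : ℂ → Matrix (Fin N) (Fin N) ℂ)
    (h : ∀ i j, Differentiable ℂ fun s => Rp s i j) : Matrix (Fin N) (Fin N) OO :=
  Matrix.of fun i j => toO (fun s => Rp s i j) ((h i j).analyticAt 0)

lemma matO_apply (Rp : ℂ → Matrix (Fin N) (Fin N) ℂ)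
    (h : ∀ i j, Differentiable ℂ fun s => Rp s i j) (i j : Fin N) :
    (matO Rp h) i j = toO (fun s => Rp s i j) ((h i j).analyticAt 0) := rfl

lemma diff_mul_entry (Rp Rq : ℂ → Matrix (Fin N) (Fin N) ℂ)
    (h : ∀ i j, Differentiable ℂ fun s => Rp s i j)
    (h' : ∀ i j, Differentiable ℂ fun s => Rq s i j) :
    ∀ i j, Differentiable ℂ fun s => (Rp s * Rq s) i j := by
  intro i j
  have : (fun s => (Rp s * Rq s) i j) = fun s => ∑ k, Rp s i k * Rq s k j := by
    funext s; rw [Matrix.mul_apply]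
  rw [this]
  apply Differentiable.fun_sum
  intro k _
  exact (h i k).mul (h' k j)

lemma matO_mul (Rp Rq : ℂ → Matrix (Fin N) (Fin N) ℂ)
    (h : ∀ i j, Differentiable ℂ fun s => Rp s i j)
    (h' : ∀ i j, Differentiable ℂ fun s => Rq s i j) :
    matO (fun s => Rp s * Rq s) (diff_mul_entry Rp Rq h h') = matO Rp h * matO Rq h' := by
  ext i j
  show (matO (fun s => Rp s * Rq s) (diff_mul_entry Rp Rq h h') i j).val = ((matO Rp h * matO Rq h') i j).val
  rw [Matrix.mul_apply, matO_apply, toO_val, val_sum]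
  have h2 : (fun s => (Rp s * Rq s) i j) = fun s => ∑ k, Rp s i k * Rq s k j := by
    funext s; rw [Matrix.mul_apply]
  rw [h2, germ_sum]
  refine Finset.sum_congr rfl fun k _ => ?_
  rw [matO_apply, matO_apply, val_mul, toO_val, toO_val, ← Filter.Germ.coe_mul]
  rfl

/-- The key approximability predicate for right factors. -/
def Approx (Q : Matrix (Fin N) (Fin N) OO) : Prop :=
  ∀ ν : ℕ, ∃ (Rp Rinv : ℂ → Matrix (Fin N) (Fin N) ℂ)
    (hd : ∀ i j, Differentiable ℂ fun s => Rp s i j),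
    (∀ i j, Differentiable ℂ fun s => Rinv s i j) ∧
    (∀ s, Rp s * Rinv s = 1 ∧ Rinv s * Rp s = 1) ∧
    ∃ E : Matrix (Fin N) (Fin N) OO, matO Rp hd = Q + (tO ^ ν) • E

lemma approx_mul {Q Q' : Matrix (Fin N) (Fin N) OO} (hQ : Approx Q) (hQ' : Approx Q') :
    Approx (Q * Q') := by
  intro ν
  obtain ⟨Rp, Rinv, hd, hdi, hinv, E, hE⟩ := hQ ν
  obtain ⟨Rp', Rinv', hd', hdi', hinv', E', hE'⟩ := hQ' ν
  refine ⟨fun s => Rp s * Rp' s, fun s => Rinv' s * Rinv s, diff_mul_entry _ _ hd hd',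
    diff_mul_entry _ _ hdi' hdi, ?_, ?_⟩
  · intro s
    constructor
    · rw [mul_assoc, ← mul_assoc (Rp' s), (hinv' s).1, one_mul, (hinv s).1]
    · rw [mul_assoc, ← mul_assoc (Rinv s), (hinv s).2, one_mul, (hinv' s).2]
  · refine ⟨E * Q' + Q * E' + (tO ^ ν) • (E * E'), ?_⟩
    rw [matO_mul _ _ hd hd', hE, hE']
    rw [add_mul, mul_add, mul_add, Matrix.smul_mul, Matrix.smul_mul, Matrix.mul_smul,
      Matrix.mul_smul, smul_add, smul_add, smul_smul]
    abel

lemma approx_const (C Cinv : Matrix (Fin N) (Fin N) ℂ) (h1 : C * Cinv = 1) (h2 : Cinv * C = 1) :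
    Approx (C.map constO) := by
  intro ν
  refine ⟨fun _ => C, fun _ => Cinv, fun i j => differentiable_const _,
    fun i j => differentiable_const _, fun s => ⟨h1, h2⟩, 0, ?_⟩
  ext i j
  simp only [smul_zero, add_zero]
  rfl


@[simp] lemma constO_val (c : ℂ) : (constO c).val = ((fun _ => c : ℂ → ℂ) : Gm) := rfl
@[simp] lemma tO_val : tO.val = ((fun z => z : ℂ → ℂ) : Gm) := rfl

lemma toO_proof_irrel (f : ℂ → ℂ) (h1 h2 : AnalyticAt ℂ f 0) : toO f h1 = toO f h2 :=
  Subtype.ext rfl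

lemma toO_add (f g : ℂ → ℂ) (hf : AnalyticAt ℂ f 0) (hg : AnalyticAt ℂ g 0) :
    toO (fun s => f s + g s) (hf.add hg) = toO f hf + toO g hg := by
  refine Subtype.ext ?_
  rw [toO_val, val_add, toO_val, toO_val, ← Filter.Germ.coe_add]
  rfl

lemma toO_mul (f g : ℂ → ℂ) (hf : AnalyticAt ℂ f 0) (hg : AnalyticAt ℂ g 0) :
    toO (fun s => f s * g s) (hf.mul hg) = toO f hf * toO g hg := by
  refine Subtype.ext ?_
  rw [toO_val, val_mul, toO_val, toO_val, ← Filter.Germ.coe_mul]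
  rfl

lemma toO_const (a : ℂ) (h : AnalyticAt ℂ (fun _ => a) 0) : toO (fun _ => a) h = constO a :=
  Subtype.ext rfl

lemma toO_id_pow (ν : ℕ) (h : AnalyticAt ℂ (fun s => s ^ ν) 0) :
    toO (fun s => s ^ ν) h = tO ^ ν := by
  refine Subtype.ext ?_
  rw [toO_val, tO_pow_val]

lemma toO_zero (h : AnalyticAt ℂ (fun _ => (0:ℂ)) 0) : toO (fun _ => 0) h = 0 :=
  Subtype.ext rfl

/-- Splitting off the constant term. -/
lemma split_const (c : OO) : ∃ (c₀ : ℂ) (c' : OO), c = constO c₀ + tO * c' := by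
  set f := rep c with hf
  have hfa : AnalyticAt ℂ f 0 := rep_analytic c
  set d := f 0 with hd
  have hga : AnalyticAt ℂ (fun z => f z - d) 0 := hfa.sub analyticAt_const
  by_cases h : ∀ᶠ z in nhds (0:ℂ), f z - d = 0
  · refine ⟨d, 0, ?_⟩
    rw [mul_zero, add_zero]
    refine Subtype.ext ?_
    rw [rep_spec c, constO_val, Filter.Germ.coe_eq]
    filter_upwards [h] with z hz
    show f z = d
    linear_combination hz
  · obtain ⟨nn, w, hw, hw0, heq⟩ := hga.exists_eventuallyEq_pow_smul_nonzero_iff.mpr h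
    have hnn : nn ≠ 0 := by
      intro h0
      apply hw0
      have := heq.self_of_nhds
      simp only [h0, sub_zero, pow_zero, one_smul, sub_self] at this
      exact this.symm.trans (by rw [hd, sub_self])
    obtain ⟨n', rfl⟩ := Nat.exists_eq_succ_of_ne_zero hnn
    refine ⟨d, toO (fun z => z ^ n' * w z) ((analyticAt_id.pow n').mul hw), ?_⟩
    refine Subtype.ext ?_
    rw [rep_spec c, val_add, val_mul, toO_val, constO_val, tO_val,
      ← Filter.Germ.coe_mul, ← Filter.Germ.coe_add, Filter.Germ.coe_eq]
    filter_upwards [heq] with z hz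
    show f z = d + z * (z ^ n' * w z)
    have h2 : f z - d = z ^ (n'+1) * w z := by simpa [smul_eq_mul] using hz
    rw [pow_succ] at h2
    linear_combination h2

/-- Polynomial truncation modulo `t^ν`. -/
lemma trunc (c : OO) (ν : ℕ) :
    ∃ (p : ℂ → ℂ) (hd : Differentiable ℂ p) (e : OO),
      toO p (hd.analyticAt 0) = c + tO ^ ν * e := by
  induction ν generalizing c with
  | zero =>
    refine ⟨fun _ => 0, differentiable_const _, -c, ?_⟩
    rw [pow_zero, one_mul, add_neg_cancel]
    exact toO_zero _
  | succ ν ih =>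
    obtain ⟨c₀, c', hc⟩ := split_const c
    obtain ⟨p', hd', e', h'⟩ := ih c'
    have hdp : Differentiable ℂ (fun s => c₀ + s * p' s) :=
      (differentiable_const _).add (differentiable_id.mul hd')
    refine ⟨_, hdp, e', ?_⟩
    have key : c + tO ^ (ν+1) * e' = constO c₀ + tO * toO p' (hd'.analyticAt 0) := by
      rw [hc, h']; ring
    rw [key]
    refine Subtype.ext ?_
    rw [toO_val, val_add, val_mul, toO_val, constO_val, tO_val,
      ← Filter.Germ.coe_mul, ← Filter.Germ.coe_add]
    rfl


/-- row-unipotent matrices are approximable -/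
lemma approx_row (c0 : Fin N) (rowC : Fin N → OO) (h0 : rowC c0 = 0) :
    Approx (1 + Matrix.of fun i j => if i = c0 then rowC j else 0) := by
  intro ν
  have H : ∀ j : Fin N, ∃ (p : ℂ → ℂ) (_ : Differentiable ℂ p) (e : OO),
      (∀ h, toO p h = rowC j + tO ^ ν * e) ∧ (j = c0 → ∀ s, p s = 0) := by
    intro j
    by_cases hj : j = c0
    · refine ⟨fun _ => 0, differentiable_const _, 0, ?_, fun _ _ => rfl⟩
      intro h
      rw [hj, h0, mul_zero, add_zero]
      exact toO_zero _
    · obtain ⟨p, hd, e, he⟩ := trunc (rowC j) ν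
      exact ⟨p, hd, e, fun h => (toO_proof_irrel _ _ _).trans he, fun hc => absurd hc hj⟩
  choose pp hdp ee hspec hzero using H
  set Xp : ℂ → Matrix (Fin N) (Fin N) ℂ :=
    fun s => Matrix.of fun i j => if i = c0 then pp j s else 0 with hXp
  have hXsq : ∀ s, Xp s * Xp s = 0 := by
    intro s
    ext i j
    rw [Matrix.mul_apply]
    have hterm : ∀ k, (Xp s i k * Xp s k j)
        = if k = c0 then (if i = c0 then pp k s else 0) * pp j s else 0 := by
      intro k
      by_cases hk : k = c0 <;> simp [hXp, hk]
    rw [Finset.sum_congr rfl fun k _ => hterm k, Finset.sum_ite_eq' Finset.univ c0]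
    simp [hzero c0 rfl s]
  have hentry : ∀ (i j : Fin N),
      (fun s => (1 + Xp s) i j)
        = fun s => (1 : Matrix (Fin N) (Fin N) ℂ) i j + (if i = c0 then pp j s else 0) := by
    intro i j; funext s; simp [hXp]
  have hentry' : ∀ (i j : Fin N),
      (fun s => (1 - Xp s) i j)
        = fun s => (1 : Matrix (Fin N) (Fin N) ℂ) i j - (if i = c0 then pp j s else 0) := by
    intro i j; funext s; simp [hXp]
  have hdiff : ∀ i j, Differentiable ℂ fun s => (1 + Xp s) i j := by
    intro i j
    rw [hentry i j]
    by_cases hi : i = c0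
    · simp only [hi, if_true]; exact (differentiable_const _).add (hdp j)
    · simp only [hi, if_false]; exact (differentiable_const _).add (differentiable_const _)
  have hdiff' : ∀ i j, Differentiable ℂ fun s => (1 - Xp s) i j := by
    intro i j
    rw [hentry' i j]
    by_cases hi : i = c0
    · simp only [hi, if_true]; exact (differentiable_const _).sub (hdp j)
    · simp only [hi, if_false]; exact (differentiable_const _).sub (differentiable_const _)
  refine ⟨fun s => 1 + Xp s, fun s => 1 - Xp s, hdiff, hdiff', ?_, ?_⟩
  · intro s
    refine ⟨?_, ?_⟩
    · calc (1 + Xp s) * (1 - Xp s) = 1 + Xp s - Xp s - Xp s * Xp s := by noncomm_ring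
        _ = 1 := by rw [hXsq s, sub_zero, add_sub_cancel_right]
    · calc (1 - Xp s) * (1 + Xp s) = 1 + Xp s - Xp s - Xp s * Xp s := by noncomm_ring
        _ = 1 := by rw [hXsq s, sub_zero, add_sub_cancel_right]
  · refine ⟨Matrix.of fun i j => if i = c0 then ee j else 0, ?_⟩
    refine Matrix.ext fun i j => ?_
    rw [matO_apply]
    conv_rhs => simp only [Matrix.add_apply, Matrix.smul_apply, Matrix.of_apply, smul_eq_mul]
    have hone : ∀ h, toO (fun s => ((1 : Matrix (Fin N) (Fin N) ℂ) i j : ℂ)) h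
        = (1 : Matrix (Fin N) (Fin N) OO) i j := by
      intro h
      by_cases hij : i = j
      · subst hij
        have he : (fun _ : ℂ => (1 : Matrix (Fin N) (Fin N) ℂ) i i) = fun _ => (1:ℂ) := by
          funext _; rw [Matrix.one_apply_eq]
        refine Subtype.ext ?_
        rw [toO_val, he, Matrix.one_apply_eq]
        rfl
      · have he : (fun _ : ℂ => (1 : Matrix (Fin N) (Fin N) ℂ) i j) = fun _ => (0:ℂ) := by
          funext _; rw [Matrix.one_apply_ne hij]
        refine Subtype.ext ?_
        rw [toO_val, he, Matrix.one_apply_ne hij]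
        rfl
    by_cases hi : i = c0
    · have hf : (fun s => (1 + Xp s) i j)
          = fun s => ((1 : Matrix (Fin N) (Fin N) ℂ) i j : ℂ) + pp j s := by
        rw [hentry i j]; simp [hi]
      have key : toO (fun s => (1 + Xp s) i j) ((hdiff i j).analyticAt 0)
          = (1 : Matrix (Fin N) (Fin N) OO) i j + toO (pp j) ((hdp j).analyticAt 0) := by
        refine Subtype.ext ?_
        rw [toO_val, val_add, toO_val, ← (hone analyticAt_const), toO_val,
          ← Filter.Germ.coe_add, Filter.Germ.coe_eq]
        filter_upwards with s
        show (1 + Xp s) i j = (1:Matrix (Fin N) (Fin N) ℂ) i j + pp j s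
        exact congrFun hf s
      rw [key, hspec j]
      simp only [hi, if_true]
      ring
    · have hf : (fun s => (1 + Xp s) i j)
          = fun s => ((1 : Matrix (Fin N) (Fin N) ℂ) i j : ℂ) := by
        rw [hentry i j]; simp [hi]
      have key : toO (fun s => (1 + Xp s) i j) ((hdiff i j).analyticAt 0)
          = (1 : Matrix (Fin N) (Fin N) OO) i j := by
        rw [← hone analyticAt_const]
        refine Subtype.ext ?_
        rw [toO_val, toO_val, Filter.Germ.coe_eq]
        filter_upwards with s
        show (1 + Xp s) i j = (1:Matrix (Fin N) (Fin N) ℂ) i j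
        exact congrFun hf s
      rw [key]
      simp [hi]


section EmbM

variable {R : Type*} [CommRing R]

/-- extend a matrix by a scalar in the top-left corner -/
def embM (a : R) (X : Matrix (Fin N) (Fin N) R) : Matrix (Fin (N+1)) (Fin (N+1)) R :=
  Matrix.of fun i j =>
    Fin.cases (Fin.cases a (fun _ => 0) j) (fun i' => Fin.cases 0 (fun j' => X i' j') j) i

@[simp] lemma embM_zz (a : R) (X : Matrix (Fin N) (Fin N) R) : embM a X 0 0 = a := rfl
@[simp] lemma embM_zs (a : R) (X : Matrix (Fin N) (Fin N) R) (j : Fin N) :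
    embM a X 0 j.succ = 0 := by simp [embM]
@[simp] lemma embM_sz (a : R) (X : Matrix (Fin N) (Fin N) R) (i : Fin N) :
    embM a X i.succ 0 = 0 := by simp [embM]
@[simp] lemma embM_ss (a : R) (X : Matrix (Fin N) (Fin N) R) (i j : Fin N) :
    embM a X i.succ j.succ = X i j := by simp [embM]

lemma embM_mul (a b : R) (X Y : Matrix (Fin N) (Fin N) R) :
    embM a X * embM b Y = embM (a * b) (X * Y) := by
  ext i j
  rw [Matrix.mul_apply, Fin.sum_univ_succ]
  refine Fin.cases ?_ (fun i' => ?_) i <;> refine Fin.cases ?_ (fun j' => ?_) j <;>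
    simp [Matrix.mul_apply]

lemma embM_one : embM (1:R) (1 : Matrix (Fin N) (Fin N) R) = 1 := by
  ext i j
  refine Fin.cases ?_ (fun i' => ?_) i <;> refine Fin.cases ?_ (fun j' => ?_) j <;>
    simp [Matrix.one_apply, Fin.succ_ne_zero, (Fin.succ_ne_zero _).symm, Fin.succ_inj]

lemma embM_diagonal (a : R) (d : Fin N → R) :
    embM a (Matrix.diagonal d) = Matrix.diagonal (Fin.cases a d) := by
  ext i j
  refine Fin.cases ?_ (fun i' => ?_) i <;> refine Fin.cases ?_ (fun j' => ?_) j <;>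
    simp [Matrix.diagonal_apply, Fin.succ_ne_zero, (Fin.succ_ne_zero _).symm, Fin.succ_inj]

lemma embM_det (a : R) (X : Matrix (Fin N) (Fin N) R) : (embM a X).det = a * X.det := by
  rw [Matrix.det_succ_row_zero, Fin.sum_univ_succ]
  have h1 : ∀ j : Fin N, ((-1:R) ^ ((j.succ : Fin (N+1)) : ℕ) * embM a X 0 j.succ *
      ((embM a X).submatrix Fin.succ j.succ.succAbove).det) = 0 := by
    intro j
    rw [embM_zs, mul_zero, zero_mul]
  rw [Finset.sum_congr rfl fun j _ => h1 j]
  have h2 : (embM a X).submatrix Fin.succ Fin.succ = X := by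
    ext i j
    rw [Matrix.submatrix_apply, embM_ss]
  simp [h2]

lemma approx_embM {X : Matrix (Fin N) (Fin N) OO} (hX : Approx X) :
    Approx (embM (1:OO) X) := by
  intro ν
  obtain ⟨Rp, Rinv, hd, hdi, hinv, E, hE⟩ := hX ν
  have hd1 : ∀ i j, Differentiable ℂ fun s => embM (1:ℂ) (Rp s) i j := by
    intro i j
    refine Fin.cases ?_ (fun i' => ?_) i <;> [skip; skip] <;> refine Fin.cases ?_ (fun j' => ?_) j <;>
      simp only [embM_zz, embM_zs, embM_sz, embM_ss]
    exacts [differentiable_const _, differentiable_const _, differentiable_const _, hd i' j']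
  have hd2 : ∀ i j, Differentiable ℂ fun s => embM (1:ℂ) (Rinv s) i j := by
    intro i j
    refine Fin.cases ?_ (fun i' => ?_) i <;> [skip; skip] <;> refine Fin.cases ?_ (fun j' => ?_) j <;>
      simp only [embM_zz, embM_zs, embM_sz, embM_ss]
    exacts [differentiable_const _, differentiable_const _, differentiable_const _, hdi i' j']
  refine ⟨fun s => embM 1 (Rp s), fun s => embM 1 (Rinv s), hd1, hd2, ?_, ?_⟩
  · intro s
    rw [embM_mul, embM_mul, (hinv s).1, (hinv s).2, mul_one, embM_one]
    exact ⟨rfl, rfl⟩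
  · refine ⟨embM 0 E, ?_⟩
    refine Matrix.ext fun i j => ?_
    rw [matO_apply]
    conv_rhs => simp only [Matrix.add_apply, Matrix.smul_apply, smul_eq_mul]
    have key : ∀ i j, matO Rp hd i j = X i j + tO ^ ν * E i j := by
      intro i j
      rw [hE]
      simp [smul_eq_mul]
    refine Fin.cases ?_ (fun i' => ?_) i <;> refine Fin.cases ?_ (fun j' => ?_) j
    · rw [embM_zz, embM_zz, mul_zero, add_zero]
      refine Subtype.ext ?_
      rw [toO_val]
      have he : (fun s => embM (1:ℂ) (Rp s) 0 0) = fun _ => (1:ℂ) := by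
        funext s; rw [embM_zz]
      rw [he]
      rfl
    · rw [embM_zs, embM_zs, mul_zero, add_zero]
      refine Subtype.ext ?_
      rw [toO_val]
      have he : (fun s => embM (1:ℂ) (Rp s) 0 j'.succ) = fun _ => (0:ℂ) := by
        funext s; rw [embM_zs]
      rw [he]
      rfl
    · rw [embM_sz, embM_sz, mul_zero, add_zero]
      refine Subtype.ext ?_
      rw [toO_val]
      have he : (fun s => embM (1:ℂ) (Rp s) i'.succ 0) = fun _ => (0:ℂ) := by
        funext s; rw [embM_sz]
      rw [he]
      rfl
    · rw [embM_ss, embM_ss, ← key i' j', matO_apply]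
      refine Subtype.ext ?_
      rw [toO_val, toO_val]
      have he : (fun s => embM (1:ℂ) (Rp s) i'.succ j'.succ) = fun s => Rp s i' j' := by
        funext s; rw [embM_ss]
      rw [he]

end EmbM


section Perm

variable {R : Type*} [CommRing R] {N' : ℕ}

lemma permL (σ : Equiv.Perm (Fin N')) (A : Matrix (Fin N') (Fin N') R) :
    (1 : Matrix (Fin N') (Fin N') R).submatrix ⇑σ id * A = A.submatrix ⇑σ id := by
  ext i j
  rw [Matrix.mul_apply]
  simp [Matrix.one_apply, ite_mul]

lemma permR (τ : Equiv.Perm (Fin N')) (A : Matrix (Fin N') (Fin N') R) :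
    A * (1 : Matrix (Fin N') (Fin N') R).submatrix id ⇑τ = A.submatrix id ⇑τ := by
  ext i j
  rw [Matrix.mul_apply]
  simp [Matrix.one_apply, mul_ite]

lemma permRL (τ : Equiv.Perm (Fin N')) :
    (1 : Matrix (Fin N') (Fin N') R).submatrix id ⇑τ
      * (1 : Matrix (Fin N') (Fin N') R).submatrix ⇑τ id = 1 := by
  ext i j
  rw [Matrix.mul_apply]
  have h : ∀ k, (1 : Matrix (Fin N') (Fin N') R).submatrix id ⇑τ i k
      * (1 : Matrix (Fin N') (Fin N') R).submatrix ⇑τ id k j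
      = (fun k' => (1 : Matrix (Fin N') (Fin N') R) i k'
          * (1 : Matrix (Fin N') (Fin N') R) k' j) (τ k) := fun k => rfl
  rw [Finset.sum_congr rfl fun k _ => h k,
    Equiv.sum_comp τ (fun k' => (1 : Matrix (Fin N') (Fin N') R) i k'
      * (1 : Matrix (Fin N') (Fin N') R) k' j), ← Matrix.mul_apply, one_mul]

lemma permLR (τ : Equiv.Perm (Fin N')) :
    (1 : Matrix (Fin N') (Fin N') R).submatrix ⇑τ id
      * (1 : Matrix (Fin N') (Fin N') R).submatrix id ⇑τ = 1 := by
  ext i j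
  rw [Matrix.mul_apply]
  have h : ∀ k, (1 : Matrix (Fin N') (Fin N') R).submatrix ⇑τ id i k
      * (1 : Matrix (Fin N') (Fin N') R).submatrix id ⇑τ k j
      = (1 : Matrix (Fin N') (Fin N') R) (τ i) k * (1 : Matrix (Fin N') (Fin N') R) k (τ j) :=
    fun k => rfl
  rw [Finset.sum_congr rfl fun k _ => h k, ← Matrix.mul_apply, one_mul]
  simp [Matrix.one_apply, Equiv.apply_eq_iff_eq]

lemma map_constO_one_entry (a b : Fin N) :
    constO ((1 : Matrix (Fin N) (Fin N) ℂ) a b) = (1 : Matrix (Fin N) (Fin N) OO) a b := by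
  by_cases hab : a = b
  · subst hab; rw [Matrix.one_apply_eq, Matrix.one_apply_eq]; exact Subtype.ext rfl
  · rw [Matrix.one_apply_ne hab, Matrix.one_apply_ne hab]; exact Subtype.ext rfl

lemma approx_perm (τ : Equiv.Perm (Fin N)) :
    Approx ((1 : Matrix (Fin N) (Fin N) OO).submatrix ⇑τ id) := by
  have h := approx_const ((1 : Matrix (Fin N) (Fin N) ℂ).submatrix ⇑τ id)
    ((1 : Matrix (Fin N) (Fin N) ℂ).submatrix id ⇑τ) (permLR τ) (permRL τ)
  have he : ((1 : Matrix (Fin N) (Fin N) ℂ).submatrix ⇑τ id).map constO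
      = (1 : Matrix (Fin N) (Fin N) OO).submatrix ⇑τ id := by
    refine Matrix.ext fun i j => ?_
    rw [Matrix.map_apply, Matrix.submatrix_apply, Matrix.submatrix_apply]
    exact map_constO_one_entry _ _
  rwa [he] at h

lemma approx_one : Approx (1 : Matrix (Fin N) (Fin N) OO) := by
  have h := approx_perm (N := N) (Equiv.refl _)
  simpa using h

end Perm


section Smith

theorem smith : ∀ (N : ℕ) (M : Matrix (Fin N) (Fin N) OO), M.det ≠ 0 →
    ∃ (P Q : Matrix (Fin N) (Fin N) OO) (k : Fin N → ℕ),
      IsUnit P.det ∧ Approx Q ∧ M = P * Matrix.diagonal (fun i => tO ^ k i) * Q := by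
  intro N
  induction N with
  | zero =>
    intro M _
    refine ⟨1, 1, fun i => 0, ?_, approx_one, ?_⟩
    · rw [Matrix.det_one]; exact isUnit_one
    · apply Subsingleton.elim
  | succ N IH =>
    intro M hM
    classical
    -- find a nonzero entry
    have hex : ∃ p : Fin (N+1) × Fin (N+1), M p.1 p.2 ≠ 0 := by
      by_contra h
      push_neg at h
      apply hM
      have : M = 0 := Matrix.ext fun i j => h (i, j)
      rw [this, Matrix.det_zero]
    set S : Finset (Fin (N+1) × Fin (N+1)) :=
      Finset.univ.filter (fun p => M p.1 p.2 ≠ 0) with hS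
    have hSne : S.Nonempty := by
      obtain ⟨p, hp⟩ := hex
      exact ⟨p, by simp [hS, hp]⟩
    obtain ⟨p0, hp0S, hmin⟩ := Finset.exists_min_image S (fun p => ord (M p.1 p.2)) hSne
    have hp0 : M p0.1 p0.2 ≠ 0 := by
      rw [hS] at hp0S
      exact (Finset.mem_filter.mp hp0S).2
    set σ : Equiv.Perm (Fin (N+1)) := Equiv.swap 0 p0.1 with hσ
    set τ : Equiv.Perm (Fin (N+1)) := Equiv.swap 0 p0.2 with hτ
    set M1 : Matrix (Fin (N+1)) (Fin (N+1)) OO := M.submatrix ⇑σ ⇑τ with hM1def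
    have hpivne : M1 0 0 ≠ 0 := by
      rw [hM1def]
      show M (σ 0) (τ 0) ≠ 0
      rw [hσ, hτ]
      simpa [Equiv.swap_apply_left] using hp0
    set piv : OO := M1 0 0 with hpiv
    have hdvd : ∀ i j, piv ∣ M1 i j := by
      intro i j
      rcases eq_or_ne (M1 i j) 0 with h | h
      · rw [h]; exact dvd_zero _
      · refine dvd_of_ord_le hpivne (Or.inr ⟨h, ?_⟩)
        have hmem : (σ i, τ j) ∈ S := by
          rw [hS, Finset.mem_filter]
          exact ⟨Finset.mem_univ _, h⟩
        have := hmin _ hmem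
        have hpp : piv = M (σ 0) (τ 0) := rfl
        rw [hσ, hτ] at hpp
        simp only [Equiv.swap_apply_left] at hpp
        rw [hpp]
        exact this
    -- column elimination
    set colC : Fin (N+1) → OO := fun i => Fin.cases 0 (fun i' => (hdvd i'.succ 0).choose) i
      with hcolC
    set CC : Matrix (Fin (N+1)) (Fin (N+1)) OO :=
      Matrix.of fun i j => if j = 0 then colC i else 0 with hCC
    have hcolC0 : colC 0 = 0 := rfl
    have hCCsq : CC * CC = 0 := by
      refine Matrix.ext fun i j => ?_
      rw [Matrix.mul_apply]
      have hterm : ∀ k, CC i k * CC k j = if k = 0 then colC i * CC 0 j else 0 := by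
        intro k
        by_cases hk : k = (0 : Fin (N+1)) <;> simp [hCC, hk]
      rw [Finset.sum_congr rfl fun k _ => hterm k, Finset.sum_ite_eq' Finset.univ 0]
      have : CC 0 j = 0 := by
        by_cases hj : j = (0 : Fin (N+1)) <;> simp [hCC, hj, hcolC0]
      simp [this]
    set EE : Matrix (Fin (N+1)) (Fin (N+1)) OO := 1 - CC with hEE
    set EEinv : Matrix (Fin (N+1)) (Fin (N+1)) OO := 1 + CC with hEEinv
    have hEinv1 : EE * EEinv = 1 := by
      rw [hEE, hEEinv]
      calc (1 - CC) * (1 + CC) = 1 + CC - CC - CC * CC := by noncomm_ring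
        _ = 1 := by rw [hCCsq, sub_zero, add_sub_cancel_right]
    have hEinv2 : EEinv * EE = 1 := by
      rw [hEE, hEEinv]
      calc (1 + CC) * (1 - CC) = 1 + CC - CC - CC * CC := by noncomm_ring
        _ = 1 := by rw [hCCsq, sub_zero, add_sub_cancel_right]
    set M2 : Matrix (Fin (N+1)) (Fin (N+1)) OO := EE * M1 with hM2def
    have hM2e : ∀ i j, M2 i j = M1 i j - colC i * M1 0 j := by
      intro i j
      rw [hM2def, Matrix.mul_apply]
      have hterm : ∀ k, EE i k * M1 k j
          = (1 : Matrix (Fin (N+1)) (Fin (N+1)) OO) i k * M1 k j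
            - (if k = 0 then colC i * M1 0 j else 0) := by
        intro k
        rw [hEE, Matrix.sub_apply, sub_mul]
        by_cases hk : k = (0:Fin (N+1)) <;> simp [hCC, hk]
      rw [Finset.sum_congr rfl fun k _ => hterm k, Finset.sum_sub_distrib,
        Finset.sum_ite_eq' Finset.univ 0, ← Matrix.mul_apply, Matrix.one_mul]
      simp
    have hM2row0 : ∀ j, M2 0 j = M1 0 j := by
      intro j
      rw [hM2e, hcolC0, zero_mul, sub_zero]
    have hM2col : ∀ i : Fin N, M2 i.succ 0 = 0 := by
      intro i
      rw [hM2e]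
      have hch : M1 i.succ 0 = piv * colC i.succ := by
        have := (hdvd i.succ 0).choose_spec
        rw [hcolC]
        simpa using this
      rw [hch, ← hpiv]
      ring
    have hdvd2 : ∀ i j, piv ∣ M2 i j := by
      intro i j
      rw [hM2e]
      exact dvd_sub (hdvd i j) ((hdvd 0 j).mul_left _)
    -- row elimination
    set rowC : Fin (N+1) → OO := fun j => Fin.cases 0 (fun j' => (hdvd2 0 j'.succ).choose) j
      with hrowC
    have hrowC0 : rowC 0 = 0 := rfl
    set XX : Matrix (Fin (N+1)) (Fin (N+1)) OO :=
      Matrix.of fun i j => if i = 0 then rowC j else 0 with hXX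
    set FF : Matrix (Fin (N+1)) (Fin (N+1)) OO := 1 - XX with hFF
    set FFinv : Matrix (Fin (N+1)) (Fin (N+1)) OO := 1 + XX with hFFinv
    have hXXsq : XX * XX = 0 := by
      refine Matrix.ext fun i j => ?_
      rw [Matrix.mul_apply]
      have hterm : ∀ k, XX i k * XX k j = if k = 0 then XX i 0 * rowC j else 0 := by
        intro k
        by_cases hk : k = (0 : Fin (N+1)) <;> simp [hXX, hk]
      rw [Finset.sum_congr rfl fun k _ => hterm k, Finset.sum_ite_eq' Finset.univ 0]
      have : XX i 0 = 0 := by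
        by_cases hi : i = (0 : Fin (N+1)) <;> simp [hXX, hi, hrowC0]
      simp [this]
    have hFinv1 : FF * FFinv = 1 := by
      rw [hFF, hFFinv]
      calc (1 - XX) * (1 + XX) = 1 + XX - XX - XX * XX := by noncomm_ring
        _ = 1 := by rw [hXXsq, sub_zero, add_sub_cancel_right]
    have hFinv2 : FFinv * FF = 1 := by
      rw [hFF, hFFinv]
      calc (1 + XX) * (1 - XX) = 1 + XX - XX - XX * XX := by noncomm_ring
        _ = 1 := by rw [hXXsq, sub_zero, add_sub_cancel_right]
    set M3 : Matrix (Fin (N+1)) (Fin (N+1)) OO := M2 * FF with hM3def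
    have hM3e : ∀ i j, M3 i j = M2 i j - M2 i 0 * rowC j := by
      intro i j
      rw [hM3def, Matrix.mul_apply]
      have hterm : ∀ k, M2 i k * FF k j
          = M2 i k * (1 : Matrix (Fin (N+1)) (Fin (N+1)) OO) k j
            - (if k = 0 then M2 i 0 * rowC j else 0) := by
        intro k
        rw [hFF, Matrix.sub_apply, mul_sub]
        by_cases hk : k = (0:Fin (N+1)) <;> simp [hXX, hk]
      rw [Finset.sum_congr rfl fun k _ => hterm k, Finset.sum_sub_distrib,
        Finset.sum_ite_eq' Finset.univ 0, ← Matrix.mul_apply, Matrix.mul_one]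
      simp
    have hM300 : M3 0 0 = piv := by
      rw [hM3e, hrowC0, mul_zero, sub_zero, hM2row0, hpiv]
    have hM3r : ∀ j : Fin N, M3 0 j.succ = 0 := by
      intro j
      rw [hM3e, hM2row0, hM2row0]
      have hch : M1 0 j.succ = piv * rowC j.succ := by
        have := (hdvd2 0 j.succ).choose_spec
        rw [hrowC]
        simp only [Fin.cases_succ]
        rw [← this, hM2row0]
      rw [hch, ← hpiv]
      ring
    have hM3c : ∀ i : Fin N, M3 i.succ 0 = 0 := by
      intro i
      rw [hM3e, hrowC0, mul_zero, sub_zero, hM2col]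
    set M' : Matrix (Fin N) (Fin N) OO := Matrix.of fun i j => M3 i.succ j.succ with hM'def
    have hM3emb : M3 = embM piv M' := by
      refine Matrix.ext fun i j => ?_
      refine Fin.cases ?_ (fun i' => ?_) i <;> refine Fin.cases ?_ (fun j' => ?_) j
      · rw [embM_zz, hM300]
      · rw [embM_zs, hM3r]
      · rw [embM_sz, hM3c]
      · rw [embM_ss, hM'def]; rfl
    -- determinant bookkeeping
    set Sp : Matrix (Fin (N+1)) (Fin (N+1)) OO :=
      (1 : Matrix (Fin (N+1)) (Fin (N+1)) OO).submatrix ⇑σ id with hSp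
    set Spinv : Matrix (Fin (N+1)) (Fin (N+1)) OO :=
      (1 : Matrix (Fin (N+1)) (Fin (N+1)) OO).submatrix id ⇑σ with hSpinv
    set Tp : Matrix (Fin (N+1)) (Fin (N+1)) OO :=
      (1 : Matrix (Fin (N+1)) (Fin (N+1)) OO).submatrix id ⇑τ with hTp
    set Tpinv : Matrix (Fin (N+1)) (Fin (N+1)) OO :=
      (1 : Matrix (Fin (N+1)) (Fin (N+1)) OO).submatrix ⇑τ id with hTpinv
    have hSpu : Sp * Spinv = 1 := permLR σ
    have hSpu' : Spinv * Sp = 1 := permRL σ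
    have hTpu : Tp * Tpinv = 1 := permRL τ
    have hTpu' : Tpinv * Tp = 1 := permLR τ
    have hM1eq : M1 = Sp * M * Tp := by
      rw [hSp, hTp, permL σ M]
      rw [permR τ (M.submatrix (⇑σ) id)]
      rw [hM1def, Matrix.submatrix_submatrix]
      rfl
    have hMrec : M = Spinv * M1 * Tpinv := by
      rw [hM1eq]
      calc M = (Spinv * Sp) * M * (Tp * Tpinv) := by rw [hSpu', hTpu, one_mul, mul_one]
        _ = Spinv * (Sp * M * Tp) * Tpinv := by noncomm_ring
    have hM1rec : M1 = EEinv * M3 * FFinv := by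
      rw [hM3def, hM2def]
      calc M1 = (EEinv * EE) * M1 * (FF * FFinv) := by rw [hEinv2, hFinv1, one_mul, mul_one]
        _ = EEinv * (EE * M1 * FF) * FFinv := by noncomm_ring
    -- units
    have hunit : ∀ (A B : Matrix (Fin (N+1)) (Fin (N+1)) OO), A * B = 1 → B * A = 1 → IsUnit A.det := by
      intro A B h1 h2
      exact (Matrix.isUnit_iff_isUnit_det A).mp ⟨⟨A, B, h1, h2⟩, rfl⟩
    -- nonzero determinant of M'
    have hdetM1 : M1.det ≠ 0 := by
      intro h0
      apply hM
      have h1 : Sp.det * M.det * Tp.det = 0 := by rw [← Matrix.det_mul, ← Matrix.det_mul, ← hM1eq, h0]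
      have h2 : (Sp.det * Tp.det) * M.det = 0 := by rw [← h1]; ring
      exact ((hunit Sp Spinv hSpu hSpu').mul (hunit Tp Tpinv hTpu hTpu')).mul_right_eq_zero.mp h2
    have hdetM3 : M3.det ≠ 0 := by
      rw [hM3def, hM2def]
      intro h0
      apply hdetM1
      have h1 : (EE.det * FF.det) * M1.det = 0 := by
        rw [← h0, Matrix.det_mul, Matrix.det_mul]; ring
      exact ((hunit EE EEinv hEinv1 hEinv2).mul (hunit FF FFinv hFinv1 hFinv2)).mul_right_eq_zero.mp h1
    have hdetM' : M'.det ≠ 0 := by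
      intro h0
      apply hdetM3
      rw [hM3emb, embM_det, h0, mul_zero]
    -- recurse
    obtain ⟨P', Q', k', hP', hQ', hfact'⟩ := IH M' hdetM'
    obtain ⟨u, hu, hpivfac⟩ := ord_spec hpivne
    set κ : ℕ := ord piv with hκ
    have hfull : M3 = embM u P' * Matrix.diagonal (fun i => tO ^ (Fin.cases κ k' i)) * embM (1:OO) Q' := by
      rw [hM3emb, hpivfac, hfact']
      have hdg : (fun i => tO ^ (Fin.cases κ k' i : ℕ))
          = Fin.cases (tO ^ κ) (fun i' => tO ^ k' i') := by
        funext i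
        refine Fin.cases ?_ (fun i' => ?_) i <;> simp
      rw [hdg, ← embM_diagonal (tO ^ κ) (fun i' => tO ^ k' i'), embM_mul, embM_mul]
      have hsc : u * tO ^ κ * 1 = tO ^ κ * u := by ring
      rw [hsc]
    refine ⟨Spinv * EEinv * embM u P', embM (1:OO) Q' * FFinv * Tpinv, Fin.cases κ k', ?_, ?_, ?_⟩
    · rw [Matrix.det_mul, Matrix.det_mul, embM_det]
      exact ((hunit Spinv Sp hSpu' hSpu).mul (hunit EEinv EE hEinv2 hEinv1)).mul (hu.mul hP')
    · refine approx_mul (approx_mul (approx_embM hQ') ?_) ?_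
      · rw [hFFinv, hXX]
        exact approx_row 0 rowC hrowC0
      · rw [hTpinv]
        exact approx_perm τ
    · rw [hMrec, hM1rec, hfull]
      noncomm_ring

end Smith

section Assembly

lemma matO_congr {f g : ℂ → Matrix (Fin N) (Fin N) ℂ} (hfg : f = g)
    (hf : ∀ i j, Differentiable ℂ fun s => f s i j) (hg : ∀ i j, Differentiable ℂ fun s => g s i j) :
    matO f hf = matO g hg := by
  subst hfg
  exact Matrix.ext fun i j =>
    toO_proof_irrel (fun s => f s i j) ((hf i j).analyticAt 0) ((hg i j).analyticAt 0)

lemma matO_one (h : ∀ i j, Differentiable ℂ fun s => (1 : Matrix (Fin N) (Fin N) ℂ) i j) :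
    matO (fun _ => (1 : Matrix (Fin N) (Fin N) ℂ)) h = 1 := by
  refine Matrix.ext fun i j => ?_
  rw [matO_apply]
  have h1 : toO (fun s => (1 : Matrix (Fin N) (Fin N) ℂ) i j) ((h i j).analyticAt 0)
      = constO ((1 : Matrix (Fin N) (Fin N) ℂ) i j) := toO_const _ _
  rw [h1, map_constO_one_entry]

lemma val_mul_entry (A B : Matrix (Fin N) (Fin N) OO) (i j : Fin N) :
    ((A * B) i j).val = ∑ k', (A i k').val * (B k' j).val := by
  rw [Matrix.mul_apply, val_sum]
  exact Finset.sum_congr rfl fun k' _ => val_mul _ _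

end Assembly

end ApproxPart

theorem birkhoff (n : ℕ) (g : ℂ → Matrix (Fin n) (Fin n) ℂ)
    (hol : ∀ i j, DifferentiableOn ℂ (fun t => g t i j) (Metric.ball (0:ℂ) 1 \ {0}))
    (mero : ∃ (m : ℕ) (G : ℂ → Matrix (Fin n) (Fin n) ℂ),
      (∀ i j, DifferentiableOn ℂ (fun t => G t i j) (Metric.ball (0:ℂ) 1)) ∧
      ∀ t ∈ Metric.ball (0:ℂ) 1, t ≠ 0 → G t = t ^ m • g t)
    (inv : ∀ t ∈ Metric.ball (0:ℂ) 1, t ≠ 0 → IsUnit (g t)) :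
    ∃ (lam : Fin n → ℤ) (L R : ℂ → Matrix (Fin n) (Fin n) ℂ),
      (∀ i j, DifferentiableOn ℂ (fun t => L t i j) (Metric.ball (0:ℂ) 1)) ∧
      (∀ i j, DifferentiableOn ℂ (fun t => R t i j) (Metric.ball (0:ℂ) 1)) ∧
      IsUnit (L 0) ∧ IsUnit (R 0) ∧
      ∀ t ∈ Metric.ball (0:ℂ) 1, t ≠ 0 →
        g t = L t * Matrix.diagonal (fun i => t ^ (lam i)) * R t := by
  classical
  obtain ⟨m, G, hG, hGg⟩ := mero
  have hball : Metric.ball (0:ℂ) 1 ∈ nhds (0:ℂ) := Metric.ball_mem_nhds 0 one_pos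
  have hGan : ∀ i j, AnalyticAt ℂ (fun s => G s i j) 0 := fun i j => (hG i j).analyticAt hball
  set GO : Matrix (Fin n) (Fin n) OO :=
    Matrix.of fun i j => toO (fun s => G s i j) (hGan i j) with hGO
  -- the determinant of GO is nonzero
  have hdetfun : (GO.det).val = ↑(fun s => (G s).det) := by
    have h1 : OO.subtype GO.det = (OO.subtype.mapMatrix GO).det := RingHom.map_det _ _
    have h2 : (Filter.Germ.coeRingHom (nhds (0:ℂ))) (fun s => (G s).det)
        = ((Filter.Germ.coeRingHom (nhds (0:ℂ))).mapMatrix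
            (Matrix.of fun i j => (fun s => G s i j))).det := by
      have h3 := RingHom.map_det (Filter.Germ.coeRingHom (nhds (0:ℂ)))
        (Matrix.of fun i j => (fun s : ℂ => G s i j))
      rw [← h3]
      congr 1
      funext s
      show (G s).det = (Matrix.of fun i j => (fun s : ℂ => G s i j)).det s
      symm
      have h4 := RingHom.map_det (Pi.evalRingHom (fun _ : ℂ => ℂ) s)
        (Matrix.of fun i j => (fun s : ℂ => G s i j))
      have h5 : (Pi.evalRingHom (fun _ : ℂ => ℂ) s).mapMatrix
          (Matrix.of fun i j => (fun s : ℂ => G s i j)) = G s := by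
        refine Matrix.ext fun i j => ?_
        rfl
      rw [← h5, ← h4]
      rfl
    have h6 : OO.subtype.mapMatrix GO
        = (Filter.Germ.coeRingHom (nhds (0:ℂ))).mapMatrix
            (Matrix.of fun i j => (fun s : ℂ => G s i j)) := by
      refine Matrix.ext fun i j => ?_
      rfl
    rw [show (GO.det).val = OO.subtype GO.det from rfl, h1, h6, ← h2]
    rfl
  have hdet : GO.det ≠ 0 := by
    intro h0
    have h1 : (↑(fun s => (G s).det) : Gm) = ((fun _ => (0:ℂ) : ℂ → ℂ) : Gm) := by
      rw [← hdetfun, h0]; rfl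
    have h2 : ∀ᶠ s in nhds (0:ℂ), (G s).det = 0 := Filter.Germ.coe_eq.mp h1
    have h3 : ∀ᶠ s in nhdsWithin (0:ℂ) {(0:ℂ)}ᶜ, (G s).det = 0 ∧ s ∈ Metric.ball (0:ℂ) 1 :=
      ((h2.and (Filter.eventually_iff_exists_mem.mpr
        ⟨Metric.ball (0:ℂ) 1, hball, fun y hy => hy⟩)).filter_mono nhdsWithin_le_nhds)
    obtain ⟨s, ⟨hs0, hsball⟩, hsne⟩ := (h3.and self_mem_nhdsWithin).exists
    have hsne' : s ≠ 0 := hsne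
    have h4 : (G s).det = s ^ (n * m) * (g s).det := by
      rw [hGg s hsball hsne', Matrix.det_smul, Fintype.card_fin]
      ring_nf
    have h5 : (g s).det ≠ 0 := by
      have := (Matrix.isUnit_iff_isUnit_det _).mp (inv s hsball hsne')
      exact this.ne_zero
    rw [h4] at hs0
    rcases mul_eq_zero.mp hs0 with h | h
    · exact pow_ne_zero _ hsne' h
    · exact h5 h
  -- apply the factorization
  obtain ⟨P, Q, k, hPdet, hQ, hfact⟩ := smith n GO hdet
  set ν : ℕ := (Finset.univ.sup k) + 1 with hν
  have hkν : ∀ j, k j < ν := fun j =>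
    Nat.lt_succ_of_le (Finset.le_sup (Finset.mem_univ j))
  obtain ⟨Rp, Rinv, hd, hdi, hinv, E, hE⟩ := hQ ν
  set RinvO : Matrix (Fin n) (Fin n) OO := matO Rinv hdi with hRinvO
  have hmat1 : matO Rp hd * RinvO = 1 := by
    rw [hRinvO, ← matO_mul Rp Rinv hd hdi]
    rw [matO_congr (f := fun s => Rp s * Rinv s) (g := fun _ => 1)
      (funext fun s => (hinv s).1) _ (fun i j => differentiable_const _)]
    exact matO_one _
  have hmat2 : RinvO * matO Rp hd = 1 := by
    rw [hRinvO, ← matO_mul Rinv Rp hdi hd]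
    rw [matO_congr (f := fun s => Rinv s * Rp s) (g := fun _ => 1)
      (funext fun s => (hinv s).2) _ (fun i j => differentiable_const _)]
    exact matO_one _
  set Dg : Matrix (Fin n) (Fin n) OO := Matrix.diagonal (fun i => tO ^ k i) with hDg
  have hQsub : Q = matO Rp hd - (tO ^ ν) • E := by rw [hE]; abel
  set J : Matrix (Fin n) (Fin n) OO := P * Dg * (E * RinvO) with hJ
  have hH : GO * RinvO = P * Dg - (tO ^ ν) • J := by
    rw [hfact, hQsub]
    calc (P * Dg * (matO Rp hd - (tO ^ ν) • E)) * RinvO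
        = P * Dg * (matO Rp hd * RinvO) - (tO ^ ν) • (P * Dg * (E * RinvO)) := by
          rw [Matrix.mul_sub, Matrix.sub_mul, Matrix.mul_smul, Matrix.smul_mul,
            Matrix.mul_assoc (P * Dg) (matO Rp hd) RinvO,
            Matrix.mul_assoc (P * Dg) E RinvO]
      _ = P * Dg - (tO ^ ν) • J := by rw [hmat1, Matrix.mul_one, hJ]
  set W : Matrix (Fin n) (Fin n) OO :=
    Matrix.of fun i j => P i j - tO ^ (ν - k j) * J i j with hW
  have hHW : ∀ i j, (GO * RinvO) i j = tO ^ (k j) * W i j := by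
    intro i j
    rw [hH, Matrix.sub_apply, Matrix.smul_apply, smul_eq_mul, hDg, Matrix.mul_diagonal]
    show P i j * tO ^ k j - tO ^ ν * J i j = tO ^ k j * W i j
    rw [hW]
    show P i j * tO ^ k j - tO ^ ν * J i j = tO ^ k j * (P i j - tO ^ (ν - k j) * J i j)
    have hsplit : tO ^ ν = tO ^ (k j) * tO ^ (ν - k j) := by
      rw [← pow_add, Nat.add_sub_cancel' (hkν j).le]
    rw [hsplit]
    ring
  have hevW : W.map ev = P.map ev := by
    refine Matrix.ext fun i j => ?_
    rw [Matrix.map_apply, Matrix.map_apply, hW]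
    show ev (P i j - tO ^ (ν - k j) * J i j) = ev (P i j)
    rw [map_sub, map_mul, map_pow, ev_tO, zero_pow, zero_mul, sub_zero]
    exact Nat.sub_ne_zero_of_lt (hkν j)
  have hLW : IsUnit (W.map ev) := by
    rw [hevW, Matrix.isUnit_iff_isUnit_det]
    have h1 : (P.map ev).det = ev P.det := by
      rw [RingHom.map_det]
      congr 1
    rw [h1, isUnit_iff_ne_zero]
    exact ev_ne_zero_of_isUnit hPdet
  -- germ identity for the key columns
  have hprod : ∀ i j, ((GO * RinvO) i j).val = ↑(fun s => (G s * Rinv s) i j) := by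
    intro i j
    rw [val_mul_entry]
    have h2 : (fun s => (G s * Rinv s) i j) = fun s => ∑ k', G s i k' * Rinv s k' j :=
      funext fun s => Matrix.mul_apply
    rw [h2, germ_sum]
    refine Finset.sum_congr rfl fun k' _ => ?_
    rw [show (GO i k').val = ↑(fun s => G s i k') from rfl,
      show (RinvO k' j).val = ↑(fun s => Rinv s k' j) from rfl, ← Filter.Germ.coe_mul]
    rfl
  have hkey : ∀ i j, ∀ᶠ s in nhds (0:ℂ), (G s * Rinv s) i j = s ^ (k j) * rep (W i j) s := by
    intro i j
    have h1 : ((GO * RinvO) i j).val = ↑(fun s => s ^ (k j) * rep (W i j) s) := by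
      rw [hHW i j, val_mul, tO_pow_val, rep_spec (W i j), ← Filter.Germ.coe_mul]
      rfl
    rw [hprod i j] at h1
    exact Filter.Germ.coe_eq.mp h1
  -- define the final data
  set lam : Fin n → ℤ := fun i => (k i : ℤ) - m with hlam
  set L : ℂ → Matrix (Fin n) (Fin n) ℂ := fun s =>
    if s = 0 then W.map ev
    else Matrix.of fun i j => (G s * Rinv s) i j * s ^ (-(k j : ℤ)) with hL
  have hLat0 : ∀ i j, ∀ᶠ s in nhds (0:ℂ), L s i j = rep (W i j) s := by
    intro i j
    filter_upwards [hkey i j] with s hs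
    by_cases hs0 : s = 0
    · rw [hL]
      simp only [hs0, if_true]
      show (W.map ev) i j = rep (W i j) 0
      rw [Matrix.map_apply]
      rfl
    · rw [hL]
      simp only [hs0, if_false]
      show (G s * Rinv s) i j * s ^ (-(k j : ℤ)) = rep (W i j) s
      rw [hs]
      rw [mul_comm (s ^ (k j)) (rep (W i j) s), mul_assoc]
      rw [← zpow_natCast s (k j), ← zpow_add₀ hs0]
      simp
  refine ⟨lam, L, Rp, ?_, ?_, ?_, ?_, ?_⟩
  · -- L is differentiable on the ball
    intro i j w hw
    by_cases hw0 : w = 0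
    · subst hw0
      have h1 : DifferentiableAt ℂ (fun s => L s i j) 0 := by
        rw [Filter.EventuallyEq.differentiableAt_iff (hLat0 i j)]
        exact (rep_analytic (W i j)).differentiableAt
      exact h1.differentiableWithinAt
    · have h2 : DifferentiableWithinAt ℂ
          (fun s => (G s * Rinv s) i j * s ^ (-(k j : ℤ))) (Metric.ball (0:ℂ) 1) w := by
        refine DifferentiableWithinAt.mul ?_ ?_
        · have h3 : (fun s => (G s * Rinv s) i j) = fun s => ∑ k', G s i k' * Rinv s k' j :=
            funext fun s => Matrix.mul_apply
          rw [h3]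
          refine DifferentiableWithinAt.fun_sum fun k' _ => ?_
          exact ((hG i k') w hw).mul ((hdi k' j) w).differentiableWithinAt
        · exact ((differentiableAt_zpow.mpr (Or.inl hw0)).differentiableWithinAt)
      refine h2.congr_of_eventuallyEq ?_ ?_
      · have h4 : ∀ᶠ s in nhdsWithin w (Metric.ball (0:ℂ) 1), s ≠ 0 := by
          apply Filter.eventually_iff_exists_mem.mpr
          exact ⟨{0}ᶜ, nhdsWithin_le_nhds (compl_singleton_mem_nhds hw0), fun y hy => hy⟩
        filter_upwards [h4] with s hs
        rw [hL]
        simp only [hs, if_false]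
        rfl
      · rw [hL]
        simp only [hw0, if_false]
        rfl
  · -- R is differentiable
    intro i j
    exact (hd i j).differentiableOn
  · -- L 0 is invertible
    rw [hL]
    simpa using hLW
  · -- R 0 is invertible
    exact ⟨⟨Rp 0, Rinv 0, (hinv 0).1, (hinv 0).2⟩, rfl⟩
  · -- the factorization identity
    intro t ht ht0
    have hLt : L t = (G t * Rinv t) * Matrix.diagonal (fun j => (t:ℂ) ^ (-(k j : ℤ))) := by
      rw [hL]
      simp only [ht0, if_false]
      refine Matrix.ext fun i j => ?_
      rw [Matrix.mul_diagonal]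
      rfl
    have hdd : Matrix.diagonal (fun j => (t:ℂ) ^ (-(k j : ℤ)))
        * Matrix.diagonal (fun i => t ^ (lam i))
        = Matrix.diagonal (fun _ => (t:ℂ) ^ (-(m:ℤ))) := by
      rw [Matrix.diagonal_mul_diagonal]
      have harg : (fun i => (t:ℂ) ^ (-(k i : ℤ)) * t ^ lam i) = fun _ => (t:ℂ) ^ (-(m:ℤ)) := by
        funext i
        rw [← zpow_add₀ ht0, hlam]
        congr 1
        ring
      rw [harg]
    have hscal : ∀ (X : Matrix (Fin n) (Fin n) ℂ) (c : ℂ),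
        X * Matrix.diagonal (fun _ => c) = c • X := by
      intro X c
      refine Matrix.ext fun i j => ?_
      rw [Matrix.mul_diagonal, Matrix.smul_apply, smul_eq_mul, mul_comm]
    rw [hLt, Matrix.mul_assoc (G t * Rinv t) _ _, hdd, hscal, Matrix.smul_mul,
      Matrix.mul_assoc (G t) (Rinv t) (Rp t), (hinv t).2, Matrix.mul_one,
      hGg t ht ht0, smul_smul]
    rw [show ((t:ℂ) ^ (-(m:ℤ)) * t ^ m) = 1 by
      rw [← zpow_natCast t m, ← zpow_add₀ ht0]; simp]
    rw [one_smul]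

end BirkhoffAux


open Metric

/-- **Meromorphic Birkhoff/Smith factorization** (Proposition 2 of the paper).
If `g` is a meromorphic map from the unit disc to `End(U)` (here `U = ℂⁿ`,
endomorphisms represented as matrices), holomorphic on the punctured disc with
`g t` invertible for `t ≠ 0`, then `g t = L t * t^A * R t` where `A` is a
diagonalizable endomorphism with integer eigenvalues `lam i` (realized as the
diagonal matrix with entries `lam i`, so `t^A` is the diagonal matrix with
entries `t ^ lam i`), and `L, R` are holomorphic across `0` with `L 0`, `R 0`
invertible. -/
theorem stmt_0 (n : ℕ) (g : ℂ → Matrix (Fin n) (Fin n) ℂ)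
    (hol : ∀ i j, DifferentiableOn ℂ (fun t => g t i j) (ball (0:ℂ) 1 \ {0}))
    (mero : ∃ (m : ℕ) (G : ℂ → Matrix (Fin n) (Fin n) ℂ),
      (∀ i j, DifferentiableOn ℂ (fun t => G t i j) (ball (0:ℂ) 1)) ∧
      ∀ t ∈ ball (0:ℂ) 1, t ≠ 0 → G t = t ^ m • g t)
    (inv : ∀ t ∈ ball (0:ℂ) 1, t ≠ 0 → IsUnit (g t)) :
    ∃ (lam : Fin n → ℤ) (L R : ℂ → Matrix (Fin n) (Fin n) ℂ),
      (∀ i j, DifferentiableOn ℂ (fun t => L t i j) (ball (0:ℂ) 1)) ∧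
      (∀ i j, DifferentiableOn ℂ (fun t => R t i j) (ball (0:ℂ) 1)) ∧
      IsUnit (L 0) ∧ IsUnit (R 0) ∧
      ∀ t ∈ ball (0:ℂ) 1, t ≠ 0 →
        g t = L t * Matrix.diagonal (fun i => t ^ (lam i)) * R t := by
  exact birkhoff n g hol mero inv
end

section
/- Let V be a finite-dimensional complex representation of C*, decomposed as V = ⊕_μ V_μ where t ∈ C* acts as t^{-μ} on V_μ. Let x̂ ∈ V be nonzero and let μ̄ be the largest μ such that the component of x̂ in V_μ is nonzero. Let R : Δ → GL(V) be holomorphic with R(0) = Id, and suppose that Γ(t) = t^A · R(t) · x̂ (where t^A acts as t^{-μ} on V_μ) extends meromorphically across t = 0 with limit point in P(V) represented by ŷ ∈ V. Then: (a) the order of pole ν of Γ at 0 satisfies ν ≥ μ̄; (b) the components y_μ of ŷ vanish for all μ < μ̄; and (c) if μ₁ denotes the smallest μ with y_μ ≠ 0, then ν ≤ μ₁. -/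
open Metric Finset

/-- **The key computation in the proof of Lemma 1 of the paper.**
`V = ℂⁿ` decomposes into weight spaces for `ℂ*`, with `t` acting as `t^{-w i}`
on the `i`-th coordinate line.  Let `x̂ ≠ 0`, let `μ̄` be the largest weight
`w i` over coordinates where `x̂` is nonzero, let `R : Δ → GL(V)` be holomorphic
with `R 0 = Id`, and suppose `Γ(t) = t^A · R(t) · x̂` has pole order `ν` at `0`
(witnessed by the holomorphic extension `F` of `t^ν • Γ`, with limit
representative `ŷ = F 0 ≠ 0`).  Then (a) `ν ≥ μ̄`; (b) `ŷᵢ = 0` whenever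
`w i < μ̄`; (c) `ν ≤ μ₁`, the smallest weight over coordinates where `ŷ` is
nonzero. -/
theorem stmt_4 (n : ℕ) (w : Fin n → ℤ) (xhat : Fin n → ℂ) (hx : xhat ≠ 0)
    (hS : (univ.filter fun i => xhat i ≠ 0).Nonempty)
    (R : ℂ → Matrix (Fin n) (Fin n) ℂ)
    (hR : ∀ i j, DifferentiableOn ℂ (fun t => R t i j) (ball (0:ℂ) 1))
    (hR0 : R 0 = 1)
    (Γ : ℂ → Fin n → ℂ)
    (hΓ : ∀ t : ℂ, t ≠ 0 → Γ t = fun i => t ^ (-(w i)) * ((R t).mulVec xhat) i)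
    (ν : ℤ) (F : ℂ → Fin n → ℂ)
    (hF : ∀ i, DifferentiableOn ℂ (fun t => F t i) (ball (0:ℂ) 1))
    (hFΓ : ∀ t ∈ ball (0:ℂ) 1, t ≠ 0 → F t = t ^ ν • Γ t)
    (yhat : Fin n → ℂ) (hy : yhat = F 0) (hy0 : yhat ≠ 0)
    (μbar : ℤ) (hμbar : μbar = (univ.filter fun i => xhat i ≠ 0).sup' hS w) :
    (μbar ≤ ν) ∧
    (∀ i, w i < μbar → yhat i = 0) ∧
    (∀ hT : (univ.filter fun i => yhat i ≠ 0).Nonempty,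
      ν ≤ (univ.filter fun i => yhat i ≠ 0).inf' hT w) := by
  have hball : (0:ℂ) ∈ ball (0:ℂ) 1 := by simp
  set g : Fin n → ℂ → ℂ := fun i t => ((R t).mulVec xhat) i with hg
  have hgdiff : ∀ i, DifferentiableOn ℂ (g i) (ball (0:ℂ) 1) := by
    intro i
    have hrew : (g i) = fun t => ∑ j, R t i j * xhat j := by
      funext t; simp [g, Matrix.mulVec, dotProduct]
    rw [hrew]
    exact DifferentiableOn.fun_sum fun j _ => (hR i j).mul_const _
  have hg0 : ∀ i, g i 0 = xhat i := by
    intro i; simp [g, hR0]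
  set l : Filter ℂ := nhdsWithin 0 (ball (0:ℂ) 1 \ {0}) with hl
  have hmem : ball (0:ℂ) 1 \ {0} ∈ l := self_mem_nhdsWithin
  have hleq : l = nhdsWithin 0 {(0:ℂ)}ᶜ := by
    rw [hl, Set.diff_eq, nhdsWithin_inter_of_mem]
    exact mem_nhdsWithin_of_mem_nhds (ball_mem_nhds 0 one_pos)
  haveI hne : l.NeBot := by
    rw [hleq]; infer_instance
  have hFt : ∀ i, Filter.Tendsto (fun t => F t i) l (nhds (F 0 i)) := fun i =>
    (((hF i).continuousOn.continuousWithinAt hball).mono Set.diff_subset)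
  have hgt : ∀ i, Filter.Tendsto (fun t => g i t) l (nhds (xhat i)) := fun i => by
    have h : Filter.Tendsto (g i) (nhdsWithin 0 (ball (0:ℂ) 1)) (nhds (g i 0)) :=
      (hgdiff i).continuousOn.continuousWithinAt hball
    rw [hg0 i] at h
    exact h.mono_left (nhdsWithin_mono _ Set.diff_subset)
  have tpow : ∀ m : ℤ, 0 < m → Filter.Tendsto (fun t : ℂ => t ^ m) l (nhds 0) := by
    intro m hm
    have h1 : Filter.Tendsto (fun t : ℂ => t ^ m.toNat) l (nhds 0) := by
      have h2 := (continuous_pow (M := ℂ) m.toNat).tendsto 0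
      rw [zero_pow (by omega : m.toNat ≠ 0)] at h2
      exact h2.mono_left nhdsWithin_le_nhds
    refine h1.congr' ?_
    filter_upwards [hmem] with t ht
    rw [← zpow_natCast, Int.toNat_of_nonneg hm.le]
  have heqF : ∀ i, ∀ᶠ t in l, F t i = t ^ (ν - w i) * g i t := by
    intro i
    filter_upwards [hmem] with t ht
    obtain ⟨htb, ht0'⟩ := ht
    have ht0 : t ≠ 0 := by simpa using ht0'
    rw [hFΓ t htb ht0, Pi.smul_apply, smul_eq_mul, hΓ t ht0]
    show t ^ ν * (t ^ (-(w i)) * g i t) = _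
    rw [← mul_assoc, ← zpow_add₀ ht0, ← sub_eq_add_neg]
  have claim1 : ∀ i, w i < ν → F 0 i = 0 := by
    intro i hi
    have h2 : Filter.Tendsto (fun t : ℂ => t ^ (ν - w i) * g i t) l (nhds (0 * xhat i)) :=
      (tpow _ (by omega)).mul (hgt i)
    have h3 := h2.congr' (Filter.EventuallyEq.symm (heqF i))
    have := tendsto_nhds_unique (hFt i) h3
    rw [this, zero_mul]
  have claim2 : ∀ i, ν < w i → xhat i = 0 := by
    intro i hi
    have heqg : ∀ᶠ t in l, g i t = t ^ (w i - ν) * F t i := by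
      filter_upwards [heqF i, hmem] with t hFe ht
      have ht0 : t ≠ 0 := by simpa using ht.2
      rw [hFe, ← mul_assoc, ← zpow_add₀ ht0]
      have hz : (w i - ν) + (ν - w i) = 0 := by ring
      rw [hz, zpow_zero, one_mul]
    have h2 : Filter.Tendsto (fun t : ℂ => t ^ (w i - ν) * F t i) l (nhds (0 * F 0 i)) :=
      (tpow _ (by omega)).mul (hFt i)
    have h3 := h2.congr' (Filter.EventuallyEq.symm heqg)
    have := tendsto_nhds_unique (hgt i) h3
    rw [this, zero_mul]
  have ha : μbar ≤ ν := by
    rw [hμbar]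
    apply Finset.sup'_le
    intro i hi
    simp only [mem_filter] at hi
    by_contra hlt
    exact hi.2 (claim2 i (by omega))
  refine ⟨ha, ?_, ?_⟩
  · intro i hwi
    rw [hy]
    exact claim1 i (by omega)
  · intro hT
    apply Finset.le_inf'
    intro i hi
    simp only [mem_filter] at hi
    by_contra h
    exact hi.2 (by rw [hy]; exact claim1 i (by omega))
end
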